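/- Under the hypotheses: $\tau,\sigma\in\mathbb{N}\cup\{0\}$ with $\tau>\sigma$; $f:\mathbb{R}\to\mathbb{R}$ locally Lipschitz and bounded by $P$; there exist $C\in(0,1)$ and an increasing sequence $(w_k)\subset(0,1)$ with $\sum_{k=1}^{\infty}(1-w_k)<\infty$ such that $\sum_{s=k}^{\infty}|1/r_s|\sum_{t=s}^{\infty}(|a_t|P+|b_t|)=O((1-w_k)(Cw_k)^k)$; and $q_n\in(0,1)$ with $\lim_n q_n=1$ and $\inf_n q_n>0$. Then the equation $\Delta(r_n\Delta(x_n+q_nx_{n-\tau}))=a_nf(x_{n-\sigma})+b_n$ has a bounded solution $x:\mathbb{N}_{\tau}\to\mathbb{R}$ satisfying the equation for every $n\ge\tau$. -/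

import Mathlib

open Filter

noncomputable def Gf (a b : ℕ → ℝ) (f : ℝ → ℝ) (σ : ℕ) (x : ℕ → ℝ) (n : ℕ) : ℝ :=
  ∑' t : ℕ, (a (n + t) * f (x (n + t - σ)) + b (n + t))

noncomputable def zfn (r a b : ℕ → ℝ) (f : ℝ → ℝ) (σ : ℕ) (x : ℕ → ℝ) (m : ℕ) : ℝ :=
  ∑' s : ℕ, (1 / r (m + s)) * Gf a b f σ x (m + s)

noncomputable def Sop (r a b q : ℕ → ℝ) (f : ℝ → ℝ) (τ σ N' : ℕ) (x : ℕ → ℝ) (n : ℕ) : ℝ :=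
  if n < N' then 0 else
  ∑ j ∈ Finset.range ((n - N') / τ + 1),
    (-1 : ℝ) ^ j * (∏ i ∈ Finset.range j, q (n - i * τ)) * zfn r a b f σ x (n - j * τ)

mutual
noncomputable def Zb (r a b q : ℕ → ℝ) (f : ℝ → ℝ) (τ σ N' : ℕ) (h : σ < τ)
    (xs zs : ℕ → ℝ) (n : ℕ) : ℝ :=
  if _hn : N' ≤ n then zs n
  else Zb r a b q f τ σ N' h xs zs (n+1) -
    (1 / r n) * (r (n+1) * (Zb r a b q f τ σ N' h xs zs (n+2) - Zb r a b q f τ σ N' h xs zs (n+1))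
      - (a n * f (Xb r a b q f τ σ N' h xs zs (n - σ)) + b n))
  termination_by 2 * N' + 2 * σ + 2 - 2 * n
  decreasing_by all_goals omega

noncomputable def Xb (r a b q : ℕ → ℝ) (f : ℝ → ℝ) (τ σ N' : ℕ) (h : σ < τ)
    (xs zs : ℕ → ℝ) (m : ℕ) : ℝ :=
  if _hm : N' ≤ m then xs m
  else (Zb r a b q f τ σ N' h xs zs (m + τ) - Xb r a b q f τ σ N' h xs zs (m + τ)) / q (m + τ)
  termination_by 2 * N' + 2 * σ + 2 - (2 * m + 2 * σ + 1)
  decreasing_by all_goals omega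
end

set_option maxHeartbeats 2000000 in
/-- Existence of a bounded full solution when `q n ∈ (0,1)` tends to `1`,
via the approximation hypothesis `(H_sb)`: tails of the double series are
`O((1 - w k)(C w k)^k)` for an increasing sequence `(w k) ⊂ (0,1)` with
`∑ (1 - w k) < ∞`, `f` locally Lipschitz and bounded by `P`. -/
theorem stmt_10 (r a b q : ℕ → ℝ) (τ σ : ℕ) (f : ℝ → ℝ) (P C : ℝ) (w : ℕ → ℝ)
    (hr : ∀ n, r n ≠ 0) (hτσ : σ < τ)
    (hf : LocallyLipschitz f) (hfP : ∀ u : ℝ, |f u| ≤ P)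
    (hC : C ∈ Set.Ioo (0 : ℝ) 1)
    (hw : StrictMono w) (hw01 : ∀ k, w k ∈ Set.Ioo (0 : ℝ) 1)
    (hwsum : Summable fun k => 1 - w k)
    (ha : Summable fun t => |a t|) (hb : Summable fun t => |b t|)
    (hs : Summable fun s => |1 / r s| * ∑' t : ℕ, (|a (s + t)| * P + |b (s + t)|))
    (hO : ∃ D > (0 : ℝ), ∃ k₀ : ℕ, ∀ k ≥ k₀,
      ∑' s : ℕ, |1 / r (k + s)| * ∑' t : ℕ, (|a (k + s + t)| * P + |b (k + s + t)|) ≤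
        D * (1 - w k) * (C * w k) ^ k)
    (hq : ∀ n, q n ∈ Set.Ioo (0 : ℝ) 1)
    (hq1 : Tendsto q atTop (nhds 1))
    (hqinf : ∃ c > (0 : ℝ), ∀ n, c ≤ q n) :
    ∃ x : ℕ → ℝ, (∃ M : ℝ, ∀ n ≥ τ, |x n| ≤ M) ∧
      ∀ n ≥ τ,
        (r (n + 1) *
            ((x (n + 2) + q (n + 2) * x (n + 2 - τ)) -
              (x (n + 1) + q (n + 1) * x (n + 1 - τ))) -
          r n *
            ((x (n + 1) + q (n + 1) * x (n + 1 - τ)) -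
              (x n + q n * x (n - τ)))) =
          a n * f (x (n - σ)) + b n := by
  obtain ⟨D, hD, k₀, hOk⟩ := hO
  obtain ⟨hC0, hC1⟩ := hC
  have hP0 : 0 ≤ P := le_trans (abs_nonneg _) (hfP 0)
  have hq0 : ∀ n, 0 < q n := fun n => (hq n).1
  have hq11 : ∀ n, q n < 1 := fun n => (hq n).2
  have hqne : ∀ n, q n ≠ 0 := fun n => ne_of_gt (hq0 n)
  -- Lipschitz constant near 0
  obtain ⟨K, t, ht, hKl⟩ := hf 0
  obtain ⟨ε, hε, hball⟩ := Metric.mem_nhds_iff.mp ht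
  set ρ : ℝ := min (ε/2) 1 with hρdef
  have hρpos : 0 < ρ := lt_min (by linarith) one_pos
  have hLip : ∀ u v : ℝ, |u| ≤ ρ → |v| ≤ ρ → |f u - f v| ≤ K * |u - v| := by
    intro u v hu hv
    have hmem : ∀ z : ℝ, |z| ≤ ρ → z ∈ t := by
      intro z hz
      apply hball
      simp only [Metric.mem_ball, Real.dist_eq, sub_zero]
      have : ρ < ε := lt_of_le_of_lt (min_le_left _ _) (by linarith)
      linarith [hz]
    have := hKl.dist_le_mul u (hmem u hu) v (hmem v hv)
    simpa [Real.dist_eq] using this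
  clear_value ρ
  -- summability infrastructure
  have shift : ∀ (g : ℕ → ℝ), Summable g → ∀ n, Summable fun t0 => g (n + t0) := by
    intro g hg n
    exact ((summable_nat_add_iff n).mpr hg).congr (fun t0 => by rw [add_comm])
  have hab : Summable (fun t0 => |a t0| * P + |b t0|) := (ha.mul_right P).add hb
  set Tin : ℕ → ℝ := fun u => ∑' t0 : ℕ, (|a (u + t0)| * P + |b (u + t0)|) with hTin
  have hTin_sum : ∀ u, Summable fun t0 => |a (u + t0)| * P + |b (u + t0)| := fun u => shift _ hab u
  have hTin_nonneg : ∀ u, 0 ≤ Tin u :=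
    fun u => tsum_nonneg (fun t0 => add_nonneg (mul_nonneg (abs_nonneg _) hP0) (abs_nonneg _))
  have hsT : Summable fun s => |1 / r s| * Tin s := hs
  have hTout_sum : ∀ m, Summable fun s => |1 / r (m + s)| * Tin (m + s) := fun m => shift _ hsT m
  set Tout : ℕ → ℝ := fun m => ∑' s : ℕ, |1 / r (m + s)| * Tin (m + s) with hToutd
  have hTout_nonneg : ∀ m, 0 ≤ Tout m :=
    fun m => tsum_nonneg (fun s => mul_nonneg (abs_nonneg _) (hTin_nonneg _))
  have hTout_le : ∀ m, k₀ ≤ m → Tout m ≤ D * C ^ m := by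
    intro m hm
    have h1 : Tout m ≤ D * (1 - w m) * (C * w m) ^ m := hOk m hm
    have hw0 := (hw01 m).1
    have hw1 := (hw01 m).2
    have h2 : (C * w m) ^ m ≤ C ^ m := by
      apply pow_le_pow_left₀ (mul_nonneg hC0.le hw0.le)
      exact mul_le_of_le_one_right hC0.le hw1.le
    have h3 : 0 ≤ (C * w m) ^ m := pow_nonneg (mul_nonneg hC0.le hw0.le) m
    have h4 : D * (1 - w m) * (C * w m) ^ m ≤ D * 1 * C ^ m := by
      have hD' : (0:ℝ) ≤ D := hD.le
      gcongr
      · linarith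
    calc Tout m ≤ D * (1 - w m) * (C * w m) ^ m := h1
    _ ≤ D * 1 * C ^ m := h4
    _ = D * C ^ m := by ring
  -- generic |tsum| ≤ tsum bound
  have tsum_abs_le : ∀ (u v : ℕ → ℝ), (∀ i, |u i| ≤ v i) → Summable v → |∑' i, u i| ≤ ∑' i, v i := by
    intro u v h hv
    have hu : Summable fun i => |u i| :=
      Summable.of_nonneg_of_le (fun i => abs_nonneg _) h hv
    have h1 := norm_tsum_le_tsum_norm (f := u) (by simpa [Real.norm_eq_abs] using hu)
    simp only [Real.norm_eq_abs] at h1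
    exact h1.trans (Summable.tsum_le_tsum h hu hv)
  -- bounds on Gf and zfn
  have habs_g : ∀ (x : ℕ → ℝ) (u : ℕ), |a u * f (x (u - σ)) + b u| ≤ |a u| * P + |b u| := by
    intro x u
    calc |a u * f (x (u - σ)) + b u| ≤ |a u * f (x (u - σ))| + |b u| := abs_add_le _ _
    _ ≤ |a u| * P + |b u| := by
        rw [abs_mul]
        have := hfP (x (u - σ))
        gcongr
  have hGsum : ∀ (x : ℕ → ℝ) (n : ℕ),
      Summable fun t0 => a (n + t0) * f (x (n + t0 - σ)) + b (n + t0) := by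
    intro x n
    apply Summable.of_norm_bounded (hTin_sum n)
    intro t0
    simpa using habs_g x (n + t0)
  have hGf_le : ∀ (x : ℕ → ℝ) (n : ℕ), |Gf a b f σ x n| ≤ Tin n := by
    intro x n
    exact tsum_abs_le _ _ (fun t0 => habs_g x (n + t0)) (hTin_sum n)
  have hzsum : ∀ (x : ℕ → ℝ) (m : ℕ),
      Summable fun s => (1 / r (m + s)) * Gf a b f σ x (m + s) := by
    intro x m
    apply Summable.of_norm_bounded (hTout_sum m)
    intro s
    rw [Real.norm_eq_abs, abs_mul]
    gcongr
    exact hGf_le x (m + s)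
  have hzf_le : ∀ (x : ℕ → ℝ) (m : ℕ), |zfn r a b f σ x m| ≤ Tout m := by
    intro x m
    apply tsum_abs_le _ _ _ (hTout_sum m)
    intro s
    rw [abs_mul]
    gcongr
    exact hGf_le x (m + s)
  -- Lipschitz bound for zfn on the ball of radius ρ
  have hK0 : (0:ℝ) ≤ (K:ℝ) := K.coe_nonneg
  obtain ⟨D₂, hD₂0, hzLip⟩ : ∃ D₂ : ℝ, 0 ≤ D₂ ∧ ∀ (x y : ℕ → ℝ) (δ : ℝ), 0 ≤ δ →
      (∀ i, |x i| ≤ ρ) → (∀ i, |y i| ≤ ρ) → (∀ i, |x i - y i| ≤ δ) →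
      ∀ m, k₀ ≤ m → |zfn r a b f σ x m - zfn r a b f σ y m| ≤ D₂ * C ^ m * δ := by
    by_cases hPp : 0 < P
    · refine ⟨K * D / P, by positivity, ?_⟩
      intro x y δ hδ hx hy hxy m hm
      have hAsum : ∀ u : ℕ, Summable fun t0 => |a (u + t0)| := fun u => shift _ ha u
      have key : ∀ u : ℕ, (∑' t0 : ℕ, |a (u + t0)|) * P ≤ Tin u := by
        intro u
        rw [← tsum_mul_right]
        exact Summable.tsum_le_tsum (fun t0 => le_add_of_nonneg_right (abs_nonneg _))
          ((hAsum u).mul_right P) (hTin_sum u)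
      have hinner : ∀ u : ℕ, |Gf a b f σ x u - Gf a b f σ y u| ≤
          (∑' t0 : ℕ, |a (u + t0)|) * ((K:ℝ) * δ) := by
        intro u
        have e : Gf a b f σ x u - Gf a b f σ y u =
            ∑' t0 : ℕ, (a (u + t0) * (f (x (u + t0 - σ)) - f (y (u + t0 - σ)))) := by
          rw [Gf, Gf, ← Summable.tsum_sub (hGsum x u) (hGsum y u)]
          exact tsum_congr (fun t0 => by ring)
        rw [e, ← tsum_mul_right]
        apply tsum_abs_le
        · intro t0
          rw [abs_mul]
          have h1 : |f (x (u + t0 - σ)) - f (y (u + t0 - σ))| ≤ (K:ℝ) * δ := by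
            calc |f (x (u + t0 - σ)) - f (y (u + t0 - σ))| ≤
                (K:ℝ) * |x (u + t0 - σ) - y (u + t0 - σ)| := hLip _ _ (hx _) (hy _)
            _ ≤ (K:ℝ) * δ := by gcongr; exact hxy _
          exact mul_le_mul_of_nonneg_left h1 (abs_nonneg _)
        · exact (hAsum u).mul_right _
      have houter : zfn r a b f σ x m - zfn r a b f σ y m =
          ∑' s : ℕ, ((1 / r (m + s)) * (Gf a b f σ x (m + s) - Gf a b f σ y (m + s))) := by
        rw [zfn, zfn, ← Summable.tsum_sub (hzsum x m) (hzsum y m)]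
        exact tsum_congr (fun s => by ring)
      have hw0 : ∀ s : ℕ, |1 / r (m + s)| * ((∑' t0 : ℕ, |a (m + s + t0)|) * ((K:ℝ) * δ)) ≤
          |1 / r (m + s)| * Tin (m + s) * ((K:ℝ) * δ) / P := by
        intro s
        rw [le_div_iff₀ hPp]
        have h1 := mul_le_mul_of_nonneg_left (key (m + s))
          (mul_nonneg (abs_nonneg (1 / r (m + s))) (mul_nonneg hK0 hδ))
        nlinarith [h1]
      have hwsum' : Summable fun s => |1 / r (m + s)| * Tin (m + s) * ((K:ℝ) * δ) / P :=
        (((hTout_sum m).mul_right ((K:ℝ) * δ)).div_const P)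
      have hmain : |zfn r a b f σ x m - zfn r a b f σ y m| ≤
          ∑' s : ℕ, (|1 / r (m + s)| * Tin (m + s) * ((K:ℝ) * δ) / P) := by
        rw [houter]
        apply tsum_abs_le
        · intro s
          calc |(1 / r (m + s)) * (Gf a b f σ x (m + s) - Gf a b f σ y (m + s))| =
              |1 / r (m + s)| * |Gf a b f σ x (m + s) - Gf a b f σ y (m + s)| := abs_mul _ _
          _ ≤ |1 / r (m + s)| * ((∑' t0 : ℕ, |a (m + s + t0)|) * ((K:ℝ) * δ)) :=
              mul_le_mul_of_nonneg_left (hinner (m + s)) (abs_nonneg _)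
          _ ≤ _ := hw0 s
        · exact hwsum'
      have hfin : ∑' s : ℕ, (|1 / r (m + s)| * Tin (m + s) * ((K:ℝ) * δ) / P) =
          Tout m * ((K:ℝ) * δ / P) := by
        rw [show (fun s => |1 / r (m + s)| * Tin (m + s) * ((K:ℝ) * δ) / P) =
            (fun s => |1 / r (m + s)| * Tin (m + s) * ((K:ℝ) * δ / P)) from funext (fun s => by ring),
          tsum_mul_right]
      rw [hfin] at hmain
      calc |zfn r a b f σ x m - zfn r a b f σ y m| ≤ Tout m * ((K:ℝ) * δ / P) := hmain
      _ ≤ (D * C ^ m) * ((K:ℝ) * δ / P) :=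
          mul_le_mul_of_nonneg_right (hTout_le m hm) (by positivity)
      _ = (K:ℝ) * D / P * C ^ m * δ := by field_simp
    · have hP : P = 0 := le_antisymm (not_lt.mp hPp) hP0
      have hf0 : ∀ u : ℝ, f u = 0 := by
        intro u
        have := hfP u
        rw [hP] at this
        exact abs_eq_zero.mp (le_antisymm this (abs_nonneg _))
      refine ⟨0, le_refl _, ?_⟩
      intro x y δ hδ hx hy hxy m hm
      have : zfn r a b f σ x m = zfn r a b f σ y m := by
        rw [zfn, zfn]
        exact tsum_congr (fun s => by rw [Gf, Gf]; exact congrArg _ (tsum_congr (fun t0 => by rw [hf0, hf0])))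
      simp [this]
  clear_value Tin Tout
  -- choice of N
  have h1C : (0:ℝ) < 1 - C := by linarith
  obtain ⟨N₁, hN₁⟩ := exists_pow_lt_of_lt_one
    (show (0:ℝ) < min (ρ * (1 - C) / (D + 1)) ((1 - C) / (2 * (D₂ + 1))) by positivity) hC1
  set N := max N₁ k₀ with hNdef
  have hNk₀ : k₀ ≤ N := le_max_right _ _
  have hCN : C ^ N ≤ C ^ N₁ := pow_le_pow_of_le_one hC0.le hC1.le (le_max_left _ _)
  have hbound1 : D * C ^ N * (1 - C)⁻¹ ≤ ρ := by
    have e1 : C ^ N < ρ * (1 - C) / (D + 1) :=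
      lt_of_le_of_lt hCN (lt_of_lt_of_le hN₁ (min_le_left _ _))
    rw [← div_eq_mul_inv, div_le_iff₀ h1C]
    rw [lt_div_iff₀ (by linarith : (0:ℝ) < D + 1)] at e1
    nlinarith [pow_nonneg hC0.le N]
  have hbound2 : D₂ * C ^ N * (1 - C)⁻¹ ≤ 1 / 2 := by
    have e1 : C ^ N < (1 - C) / (2 * (D₂ + 1)) :=
      lt_of_le_of_lt hCN (lt_of_lt_of_le hN₁ (min_le_right _ _))
    rw [← div_eq_mul_inv, div_le_iff₀ h1C]
    rw [lt_div_iff₀ (by linarith : (0:ℝ) < 2 * (D₂ + 1))] at e1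
    nlinarith [pow_nonneg hC0.le N]
  set N' := N + τ with hN'def
  have τpos : 0 < τ := lt_of_le_of_lt (Nat.zero_le σ) hτσ
  have hτN' : τ ≤ N' := Nat.le_add_left τ N
  have hN'N : N ≤ N' := Nat.le_add_right N τ
  clear_value N
  -- geometric chain sums
  have chain : ∀ n, N' ≤ n →
      (∑ j ∈ Finset.range ((n - N') / τ + 1), C ^ (n - j * τ)) ≤ C ^ N * (1 - C)⁻¹ := by
    intro n hn
    set J := (n - N') / τ with hJdef
    have hstep : ∀ j ∈ Finset.range (J + 1), C ^ (n - j * τ) ≤ C ^ N' * C ^ (J - j) := by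
      intro j hj
      rw [← pow_add]
      apply pow_le_pow_of_le_one hC0.le hC1.le
      have h1 : J * τ ≤ n - N' := Nat.div_mul_le_self _ _
      have h2 : j ≤ J := Nat.lt_succ_iff.mp (Finset.mem_range.mp hj)
      have h3 : j * τ ≤ J * τ := Nat.mul_le_mul_right _ h2
      have h4 : (J - j) * τ = J * τ - j * τ := Nat.sub_mul J j τ
      have h5 : (J - j) ≤ (J - j) * τ := Nat.le_mul_of_pos_right _ τpos
      omega
    calc ∑ j ∈ Finset.range (J + 1), C ^ (n - j * τ)
        ≤ ∑ j ∈ Finset.range (J + 1), C ^ N' * C ^ (J - j) := Finset.sum_le_sum hstep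
    _ = C ^ N' * ∑ j ∈ Finset.range (J + 1), C ^ (J - j) := by rw [← Finset.mul_sum]
    _ = C ^ N' * ∑ j ∈ Finset.range (J + 1), C ^ j := by
        congr 1
        have h6 := Finset.sum_range_reflect (fun i => C ^ i) (J + 1)
        simpa using h6
    _ ≤ C ^ N' * (1 - C)⁻¹ := by
        apply mul_le_mul_of_nonneg_left _ (pow_nonneg hC0.le _)
        calc ∑ j ∈ Finset.range (J + 1), C ^ j ≤ ∑' j : ℕ, C ^ j :=
              Summable.sum_le_tsum _ (fun i _ => pow_nonneg hC0.le i)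
                (summable_geometric_of_lt_one hC0.le hC1)
          _ = (1 - C)⁻¹ := tsum_geometric_of_lt_one hC0.le hC1
    _ ≤ C ^ N * (1 - C)⁻¹ :=
        mul_le_mul_of_nonneg_right (pow_le_pow_of_le_one hC0.le hC1.le hN'N)
          (inv_nonneg.mpr h1C.le)
  -- Sop basic lemmas
  have hSop_lt : ∀ (x : ℕ → ℝ) (n : ℕ), n < N' → Sop r a b q f τ σ N' x n = 0 := by
    intro x n hn
    rw [Sop, if_pos hn]
  have habsQ : ∀ (n j : ℕ), |(-1:ℝ)^j * (∏ i ∈ Finset.range j, q (n - i*τ))| ≤ 1 := by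
    intro n j
    rw [abs_mul, abs_pow, abs_neg, abs_one, one_pow, one_mul, Finset.abs_prod]
    apply Finset.prod_le_one
    · intro i _; exact abs_nonneg _
    · intro i _
      rw [abs_of_pos (hq0 _)]
      exact (hq11 _).le
  have hidx : ∀ n, N' ≤ n → ∀ j ∈ Finset.range ((n - N') / τ + 1), N' ≤ n - j * τ := by
    intro n hn j hj
    have h1 := Nat.div_mul_le_self (n - N') τ
    have h2 : j ≤ (n - N') / τ := Nat.lt_succ_iff.mp (Finset.mem_range.mp hj)
    have h3 : j * τ ≤ ((n - N') / τ) * τ := Nat.mul_le_mul_right _ h2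
    omega
  have hk₀N' : k₀ ≤ N' := le_trans hNk₀ (Nat.le_add_right N τ)
  have hSop_bound : ∀ (x : ℕ → ℝ) (n : ℕ), |Sop r a b q f τ σ N' x n| ≤ ρ := by
    intro x n
    by_cases hn : n < N'
    · rw [hSop_lt x n hn]; simpa using hρpos.le
    · push_neg at hn
      rw [Sop, if_neg (not_lt.mpr hn)]
      have hterm : ∀ j ∈ Finset.range ((n - N') / τ + 1),
          |(-1:ℝ)^j * (∏ i ∈ Finset.range j, q (n - i*τ)) * zfn r a b f σ x (n - j*τ)| ≤
            D * C ^ (n - j*τ) := by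
        intro j hj
        rw [abs_mul]
        have h1 : |zfn r a b f σ x (n - j*τ)| ≤ D * C ^ (n - j*τ) :=
          (hzf_le x _).trans (hTout_le _ (le_trans hk₀N' (hidx n hn j hj)))
        have h2 := mul_le_mul (habsQ n j) h1 (abs_nonneg _) one_pos.le
        simpa using h2
      calc |∑ j ∈ Finset.range ((n - N') / τ + 1),
          (-1:ℝ)^j * (∏ i ∈ Finset.range j, q (n - i*τ)) * zfn r a b f σ x (n - j*τ)|
          ≤ ∑ j ∈ Finset.range ((n - N') / τ + 1),
            |(-1:ℝ)^j * (∏ i ∈ Finset.range j, q (n - i*τ)) * zfn r a b f σ x (n - j*τ)| :=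
            Finset.abs_sum_le_sum_abs _ _
      _ ≤ ∑ j ∈ Finset.range ((n - N') / τ + 1), D * C ^ (n - j*τ) := Finset.sum_le_sum hterm
      _ = D * ∑ j ∈ Finset.range ((n - N') / τ + 1), C ^ (n - j*τ) := by rw [← Finset.mul_sum]
      _ ≤ D * (C ^ N * (1 - C)⁻¹) := mul_le_mul_of_nonneg_left (chain n hn) hD.le
      _ ≤ ρ := by rw [← mul_assoc]; exact hbound1
  have hSop_contr : ∀ (x y : ℕ → ℝ) (δ : ℝ), 0 ≤ δ → (∀ i, |x i| ≤ ρ) → (∀ i, |y i| ≤ ρ) →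
      (∀ i, |x i - y i| ≤ δ) → ∀ n,
      |Sop r a b q f τ σ N' x n - Sop r a b q f τ σ N' y n| ≤ δ / 2 := by
    intro x y δ hδ hx hy hxy n
    by_cases hn : n < N'
    · rw [hSop_lt x n hn, hSop_lt y n hn]
      simpa using by linarith
    · push_neg at hn
      rw [Sop, Sop, if_neg (not_lt.mpr hn), if_neg (not_lt.mpr hn), ← Finset.sum_sub_distrib]
      have hterm : ∀ j ∈ Finset.range ((n - N') / τ + 1),
          |(-1:ℝ)^j * (∏ i ∈ Finset.range j, q (n - i*τ)) * zfn r a b f σ x (n - j*τ) -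
           (-1:ℝ)^j * (∏ i ∈ Finset.range j, q (n - i*τ)) * zfn r a b f σ y (n - j*τ)| ≤
            D₂ * δ * C ^ (n - j*τ) := by
        intro j hj
        rw [← mul_sub, abs_mul]
        have h1 : |zfn r a b f σ x (n - j*τ) - zfn r a b f σ y (n - j*τ)| ≤
            D₂ * C ^ (n - j*τ) * δ :=
          hzLip x y δ hδ hx hy hxy _ (le_trans hk₀N' (hidx n hn j hj))
        have h2 := mul_le_mul (habsQ n j) h1 (abs_nonneg _) one_pos.le
        calc |(-1:ℝ)^j * (∏ i ∈ Finset.range j, q (n - i*τ))| *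
            |zfn r a b f σ x (n - j*τ) - zfn r a b f σ y (n - j*τ)| ≤
            1 * (D₂ * C ^ (n - j*τ) * δ) := h2
        _ = D₂ * δ * C ^ (n - j*τ) := by ring
      calc |∑ j ∈ Finset.range ((n - N') / τ + 1),
            ((-1:ℝ)^j * (∏ i ∈ Finset.range j, q (n - i*τ)) * zfn r a b f σ x (n - j*τ) -
             (-1:ℝ)^j * (∏ i ∈ Finset.range j, q (n - i*τ)) * zfn r a b f σ y (n - j*τ))|
          ≤ ∑ j ∈ Finset.range ((n - N') / τ + 1),
            |(-1:ℝ)^j * (∏ i ∈ Finset.range j, q (n - i*τ)) * zfn r a b f σ x (n - j*τ) -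
             (-1:ℝ)^j * (∏ i ∈ Finset.range j, q (n - i*τ)) * zfn r a b f σ y (n - j*τ)| :=
            Finset.abs_sum_le_sum_abs _ _
      _ ≤ ∑ j ∈ Finset.range ((n - N') / τ + 1), D₂ * δ * C ^ (n - j*τ) :=
            Finset.sum_le_sum hterm
      _ = D₂ * δ * ∑ j ∈ Finset.range ((n - N') / τ + 1), C ^ (n - j*τ) := by
            rw [← Finset.mul_sum]
      _ ≤ D₂ * δ * (C ^ N * (1 - C)⁻¹) :=
            mul_le_mul_of_nonneg_left (chain n hn) (by positivity)
      _ ≤ δ / 2 := by nlinarith [hbound2, hδ, hD₂0]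
  -- Sop recurrence
  have hSop_rec : ∀ (x : ℕ → ℝ) (n : ℕ), N' ≤ n →
      Sop r a b q f τ σ N' x n =
        zfn r a b f σ x n - q n * Sop r a b q f τ σ N' x (n - τ) := by
    intro x n hn
    by_cases hcase : n < N' + τ
    · have hJ0 : (n - N') / τ = 0 := Nat.div_eq_of_lt (by omega)
      rw [Sop, if_neg (not_lt.mpr hn), hJ0, hSop_lt x (n - τ) (by omega)]
      simp
    · push_neg at hcase
      have hJ : (n - N') / τ = (n - τ - N') / τ + 1 := by
        have he : n - N' = (n - τ - N') + τ := by omega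
        rw [he, Nat.add_div_right _ τpos]
      rw [Sop, Sop, if_neg (not_lt.mpr hn),
        if_neg (not_lt.mpr (by omega : N' ≤ n - τ)), hJ, Finset.sum_range_succ']
      have hfk : ∀ k : ℕ,
          (-1:ℝ)^(k+1) * (∏ i ∈ Finset.range (k+1), q (n - i*τ)) *
              zfn r a b f σ x (n - (k+1)*τ) =
          -(q n * ((-1:ℝ)^k * (∏ i ∈ Finset.range k, q (n - τ - i*τ)) *
              zfn r a b f σ x (n - τ - k*τ))) := by
        intro k
        have hprod : (∏ i ∈ Finset.range (k+1), q (n - i*τ)) =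
            (∏ i ∈ Finset.range k, q (n - τ - i*τ)) * q n := by
          rw [Finset.prod_range_succ']
          congr 1
          · apply Finset.prod_congr rfl
            intro i _
            congr 1
            rw [Nat.succ_mul, Nat.sub_sub, Nat.add_comm]
          · simp
        have hidx2 : n - (k+1)*τ = n - τ - k*τ := by
          rw [Nat.succ_mul, Nat.sub_sub, Nat.add_comm]
        rw [hprod, hidx2, pow_succ]
        ring
      have e : ∑ k ∈ Finset.range ((n - τ - N') / τ + 1),
          (-1:ℝ)^(k+1) * (∏ i ∈ Finset.range (k+1), q (n - i*τ)) *
            zfn r a b f σ x (n - (k+1)*τ) =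
          -(q n * ∑ k ∈ Finset.range ((n - τ - N') / τ + 1),
            (-1:ℝ)^k * (∏ i ∈ Finset.range k, q (n - τ - i*τ)) *
              zfn r a b f σ x (n - τ - k*τ)) := by
        rw [Finset.mul_sum, ← Finset.sum_neg_distrib]
        exact Finset.sum_congr rfl (fun k _ => hfk k)
      rw [e]
      simp
      ring
  -- Picard iterates
  set F : (ℕ → ℝ) → ℕ → ℝ := Sop r a b q f τ σ N' with hFdef
  set it : ℕ → ℕ → ℝ := fun k => F^[k] (fun _ => 0) with hitdef
  have hit0 : ∀ i, it 0 i = 0 := fun i => rfl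
  have hitS : ∀ k, it (k+1) = F (it k) := fun k => Function.iterate_succ_apply' F k _
  have hitb : ∀ k i, |it k i| ≤ ρ := by
    intro k
    induction k with
    | zero => intro i; simpa [hit0] using hρpos.le
    | succ k ih => intro i; rw [hitS]; exact hSop_bound (it k) i
  have hdb : ∀ k i, |it (k+1) i - it k i| ≤ ρ * (1/2)^k := by
    intro k
    induction k with
    | zero =>
        intro i
        simpa [hit0] using hitb 1 i
    | succ k ih =>
        intro i
        rw [hitS (k+1), hitS k]
        have h1 := hSop_contr (F (it k)) (it k) (ρ * (1/2)^k)
          (mul_nonneg hρpos.le (by norm_num))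
          (by rw [← hitS]; exact hitb (k+1)) (hitb k) (by rw [← hitS]; exact ih) i
        calc |F (F (it k)) i - F (it k) i| ≤ (ρ * (1/2)^k) / 2 := by
              simpa [hitS] using h1
        _ = ρ * (1/2)^(k+1) := by ring
  set xstar : ℕ → ℝ := fun i => ∑' k : ℕ, (it (k+1) i - it k i) with hxsdef
  have hdsum : ∀ i, Summable fun k => it (k+1) i - it k i := by
    intro i
    apply Summable.of_norm_bounded (g := fun k => ρ * (1/2)^k)
      ((summable_geometric_of_lt_one (by norm_num) (by norm_num)).mul_left ρ)
    intro k; simpa using hdb k i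
  have hgeo2 : ∀ Kk : ℕ, Summable (fun k : ℕ => ρ * (1/2:ℝ)^Kk * (1/2:ℝ)^k) :=
    fun Kk => (summable_geometric_of_lt_one (by norm_num) (by norm_num)).mul_left _
  have htail : ∀ (Kk : ℕ) (i : ℕ), |xstar i - it Kk i| ≤ ρ * (1/2)^Kk * 2 := by
    intro Kk i
    have h1 := Summable.sum_add_tsum_nat_add Kk (hdsum i)
    rw [Finset.sum_range_sub (fun k => it k i), hit0, sub_zero] at h1
    have h2 : xstar i - it Kk i = ∑' k : ℕ, (it (k + Kk + 1) i - it (k + Kk) i) := by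
      rw [hxsdef]
      simp only []
      linarith [h1]
    rw [h2]
    have h3 : ∀ k : ℕ, |it (k + Kk + 1) i - it (k + Kk) i| ≤ ρ * (1/2)^Kk * (1/2)^k := by
      intro k
      have h4 := hdb (k + Kk) i
      calc |it (k + Kk + 1) i - it (k + Kk) i| ≤ ρ * (1/2)^(k + Kk) := h4
      _ = ρ * (1/2)^Kk * (1/2)^k := by rw [pow_add]; ring
    calc |∑' k : ℕ, (it (k + Kk + 1) i - it (k + Kk) i)| ≤
        ∑' k : ℕ, ρ * (1/2)^Kk * (1/2)^k := tsum_abs_le _ _ h3 (hgeo2 Kk)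
    _ = ρ * (1/2)^Kk * ∑' k : ℕ, (1/2:ℝ)^k := tsum_mul_left
    _ = ρ * (1/2)^Kk * 2 := by
        rw [tsum_geometric_of_lt_one (by norm_num) (by norm_num)]
        norm_num
  have hxz : ∀ n, n < N' → xstar n = 0 := by
    intro n hn
    have hz : ∀ k, it k n = 0 := by
      intro k
      induction k with
      | zero => exact hit0 n
      | succ k ih => rw [hitS]; exact hSop_lt (it k) n hn
    have he : (fun k : ℕ => it (k+1) n - it k n) = fun _ => 0 := by
      funext k; rw [hz, hz, sub_zero]
    have h0 : (∑' k : ℕ, (it (k+1) n - it k n)) = 0 := by rw [he, tsum_zero]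
    rw [hxsdef]
    exact h0
  clear_value F it xstar
  have hxb : ∀ i, |xstar i| ≤ ρ := by
    intro i
    apply le_of_forall_pos_le_add
    intro ε hε
    obtain ⟨Kk, hKk⟩ := exists_pow_lt_of_lt_one
      (div_pos hε (mul_pos two_pos hρpos)) (show (1:ℝ)/2 < 1 by norm_num)
    have h1 := htail Kk i
    have h2 := hitb Kk i
    have h3 : |xstar i| ≤ |xstar i - it Kk i| + |it Kk i| := by
      have h3' := abs_add_le (xstar i - it Kk i) (it Kk i)
      rw [sub_add_cancel] at h3'
      exact h3'
    have h4' : (1/2:ℝ)^Kk * (2 * ρ) < ε := (lt_div_iff₀ (mul_pos two_pos hρpos)).mp hKk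
    have h4 : ρ * (1/2)^Kk * 2 ≤ ε := by
      have he : ρ * (1/2:ℝ)^Kk * 2 = (1/2:ℝ)^Kk * (2 * ρ) := by ring
      linarith
    linarith
  have hfix : ∀ n, F xstar n = xstar n := by
    intro n
    have key : ∀ ε : ℝ, 0 < ε → |F xstar n - xstar n| ≤ ε := by
      intro ε hε
      obtain ⟨Kk, hKk⟩ := exists_pow_lt_of_lt_one
        (div_pos hε (mul_pos (by norm_num : (0:ℝ) < 3) hρpos)) (show (1:ℝ)/2 < 1 by norm_num)
      have h1 := hSop_contr xstar (it Kk) (ρ * (1/2)^Kk * 2)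
        (mul_nonneg (mul_nonneg hρpos.le (by norm_num)) (by norm_num)) hxb (hitb Kk)
        (fun i => htail Kk i) n
      have h2 := htail (Kk+1) n
      have h3 : F (it Kk) n = it (Kk+1) n := by rw [hitS]
      have h4 : |F xstar n - xstar n| ≤
          |F xstar n - F (it Kk) n| + |it (Kk+1) n - xstar n| := by
        rw [h3]
        have h4' := abs_add_le (F xstar n - it (Kk+1) n)
          (it (Kk+1) n - xstar n)
        rw [sub_add_sub_cancel] at h4'
        exact h4'
      have h5 : |it (Kk+1) n - xstar n| ≤ ρ * (1/2)^(Kk+1) * 2 := by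
        rw [abs_sub_comm]; exact h2
      have h6 : |F xstar n - F (it Kk) n| ≤ (ρ * (1/2)^Kk * 2) / 2 := h1
      have h7 : ρ * (1/2)^(Kk+1) * 2 = ρ * (1/2)^Kk := by ring
      have h8 : (ρ * (1/2)^Kk * 2) / 2 = ρ * (1/2)^Kk := by ring
      have h9' : (1/2:ℝ)^Kk * (3 * ρ) < ε := (lt_div_iff₀ (mul_pos (by norm_num) hρpos)).mp hKk
      have h9 : ρ * (1/2)^Kk ≤ ε / 3 := by
        have he : ρ * (1/2:ℝ)^Kk * 3 = (1/2:ℝ)^Kk * (3 * ρ) := by ring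
        linarith
      linarith
    have h0 : |F xstar n - xstar n| ≤ 0 := by
      apply le_of_forall_pos_le_add
      intro ε hε
      simpa using key ε hε
    have h1 : F xstar n - xstar n = 0 :=
      abs_eq_zero.mp (le_antisymm h0 (abs_nonneg _))
    linarith [h1]
  have P1 : ∀ n, N' ≤ n → xstar n = zfn r a b f σ xstar n - q n * xstar (n - τ) := by
    intro n hn
    have h1 := hSop_rec xstar n hn
    rw [hfix n, hfix (n - τ)] at h1
    exact h1
  -- tail-sum telescoping identities
  have hEQ3 : ∀ n : ℕ, r n * (zfn r a b f σ xstar n - zfn r a b f σ xstar (n+1)) =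
      Gf a b f σ xstar n := by
    intro n
    have h := Summable.tsum_eq_zero_add (hzsum xstar n)
    simp only [Nat.add_zero] at h
    have h2 : (∑' s : ℕ, (1 / r (n + (s+1))) * Gf a b f σ xstar (n + (s+1))) =
        zfn r a b f σ xstar (n+1) := by
      rw [zfn]
      exact tsum_congr (fun s => by rw [show n + (s+1) = (n+1) + s from by omega])
    rw [h2] at h
    have h3 : zfn r a b f σ xstar n =
        (1 / r n) * Gf a b f σ xstar n + zfn r a b f σ xstar (n+1) := by
      rw [zfn]; exact h
    rw [h3, add_sub_cancel_right, ← mul_assoc, mul_one_div_cancel (hr n), one_mul]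
  have hEQ4 : ∀ n : ℕ, Gf a b f σ xstar n - Gf a b f σ xstar (n+1) =
      a n * f (xstar (n - σ)) + b n := by
    intro n
    have h := Summable.tsum_eq_zero_add (hGsum xstar n)
    simp only [Nat.add_zero] at h
    have h2 : (∑' t0 : ℕ, (a (n + (t0+1)) * f (xstar (n + (t0+1) - σ)) + b (n + (t0+1)))) =
        Gf a b f σ xstar (n+1) := by
      rw [Gf]
      exact tsum_congr (fun t0 => by rw [show n + (t0+1) = (n+1) + t0 from by omega])
    rw [h2] at h
    have h3 : Gf a b f σ xstar n =
        (a n * f (xstar (n - σ)) + b n) + Gf a b f σ xstar (n+1) := h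
    linarith [h3]
  -- unfolding lemmas for the backward extension
  have hZge : ∀ n, N' ≤ n → Zb r a b q f τ σ N' hτσ xstar (zfn r a b f σ xstar) n = zfn r a b f σ xstar n := by
    intro n hn; rw [Zb, dif_pos hn]
  have hXge : ∀ m, N' ≤ m → Xb r a b q f τ σ N' hτσ xstar (zfn r a b f σ xstar) m = xstar m := by
    intro m hm; rw [Xb, dif_pos hm]
  have hXlt : ∀ m, m < N' → Xb r a b q f τ σ N' hτσ xstar (zfn r a b f σ xstar) m =
      (Zb r a b q f τ σ N' hτσ xstar (zfn r a b f σ xstar) (m + τ) - Xb r a b q f τ σ N' hτσ xstar (zfn r a b f σ xstar) (m + τ)) / q (m + τ) := by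
    intro m hm
    conv_lhs => rw [Xb]
    rw [dif_neg (by omega)]
  have hZlt : ∀ n, n < N' → Zb r a b q f τ σ N' hτσ xstar (zfn r a b f σ xstar) n =
      Zb r a b q f τ σ N' hτσ xstar (zfn r a b f σ xstar) (n+1) - (1 / r n) * (r (n+1) * (Zb r a b q f τ σ N' hτσ xstar (zfn r a b f σ xstar) (n+2) - Zb r a b q f τ σ N' hτσ xstar (zfn r a b f σ xstar) (n+1)) -
        (a n * f (Xb r a b q f τ σ N' hτσ xstar (zfn r a b f σ xstar) (n - σ)) + b n)) := by
    intro n hn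
    conv_lhs => rw [Zb]
    rw [dif_neg (by omega)]
  have hX0 : ∀ m, N' - τ ≤ m → m < N' → Xb r a b q f τ σ N' hτσ xstar (zfn r a b f σ xstar) m = 0 := by
    intro m h1 h2
    rw [hXlt m h2]
    have hm : N' ≤ m + τ := by omega
    rw [hZge _ hm, hXge _ hm]
    have h3 := P1 (m + τ) hm
    rw [Nat.add_sub_cancel] at h3
    rw [hxz m h2] at h3
    rw [h3]
    simp
  have hXx : ∀ i, N' - τ ≤ i → Xb r a b q f τ σ N' hτσ xstar (zfn r a b f σ xstar) i = xstar i := by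
    intro i hi
    by_cases hc : N' ≤ i
    · exact hXge i hc
    · push_neg at hc
      rw [hX0 i hi hc, hxz i hc]
  have hI : ∀ m, τ ≤ m → Xb r a b q f τ σ N' hτσ xstar (zfn r a b f σ xstar) m + q m * Xb r a b q f τ σ N' hτσ xstar (zfn r a b f σ xstar) (m - τ) = Zb r a b q f τ σ N' hτσ xstar (zfn r a b f σ xstar) m := by
    intro m hm
    by_cases hc : m < N' + τ
    · have h1 : m - τ < N' := by omega
      rw [hXlt (m - τ) h1, Nat.sub_add_cancel hm, mul_div_cancel₀ _ (hqne m)]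
      ring
    · push_neg at hc
      have h2 : N' ≤ m - τ := by omega
      rw [hXge m (by omega), hXge (m - τ) h2, hZge m (by omega)]
      have h3 := P1 m (by omega)
      linarith [h3]
  have hEQ : ∀ n, τ ≤ n →
      r (n+1) * (Zb r a b q f τ σ N' hτσ xstar (zfn r a b f σ xstar) (n+2) - Zb r a b q f τ σ N' hτσ xstar (zfn r a b f σ xstar) (n+1)) - r n * (Zb r a b q f τ σ N' hτσ xstar (zfn r a b f σ xstar) (n+1) - Zb r a b q f τ σ N' hτσ xstar (zfn r a b f σ xstar) n) =
        a n * f (Xb r a b q f τ σ N' hτσ xstar (zfn r a b f σ xstar) (n - σ)) + b n := by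
    intro n hn
    by_cases hc : N' ≤ n
    · rw [hZge n hc, hZge (n+1) (by omega), hZge (n+2) (by omega),
        hXx (n - σ) (by omega)]
      have e1 := hEQ3 n
      have e2 := hEQ3 (n+1)
      have e3 := hEQ4 n
      linear_combination e1 - e2 + e3
    · push_neg at hc
      rw [hZlt n hc]
      have hrn := hr n
      field_simp
      ring
  -- conclusion
  refine ⟨Xb r a b q f τ σ N' hτσ xstar (zfn r a b f σ xstar), ⟨ρ + ∑ m ∈ Finset.range N', |Xb r a b q f τ σ N' hτσ xstar (zfn r a b f σ xstar) m|, ?_⟩, ?_⟩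
  · intro n _
    by_cases hc : N' ≤ n
    · rw [hXge n hc]
      have h1 := hxb n
      have h2 : (0:ℝ) ≤ ∑ m ∈ Finset.range N', |Xb r a b q f τ σ N' hτσ xstar (zfn r a b f σ xstar) m| :=
        Finset.sum_nonneg (fun m _ => abs_nonneg _)
      linarith
    · push_neg at hc
      have h1 : |Xb r a b q f τ σ N' hτσ xstar (zfn r a b f σ xstar) n| ≤ ∑ m ∈ Finset.range N', |Xb r a b q f τ σ N' hτσ xstar (zfn r a b f σ xstar) m| :=
        Finset.single_le_sum
          (f := fun m => |Xb r a b q f τ σ N' hτσ xstar (zfn r a b f σ xstar) m|)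
          (fun m _ => abs_nonneg _) (Finset.mem_range.mpr hc)
      linarith [hρpos]
  · intro n hn
    have e1 := hI n (by omega)
    have e2 := hI (n+1) (by omega)
    have e3 := hI (n+2) (by omega)
    rw [e3, e2, e1]
    exact hEQ n hn
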